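/- The K-subalgebra of A generated by the set {x_i * ∂_j : i, j ∈ Fin n with |i − j| = 1} ∪ {x_{n-1} * x_{n-1}, ∂_{n-1} * ∂_{n-1}} equals {w ∈ W : w * τ = τ * w}, the fixed-point subalgebra A_n(K)^ε of the sign automorphism of the Weyl algebra. (This is the assertion that the image of the homomorphism π : U(sp_{2n}) → A_n(K) of Lemma 7.4 coincides with A_n(K)^ε.) -/

import Mathlib

set_option maxHeartbeats 1000000
set_option synthInstance.maxHeartbeats 200000


open MvPolynomial

/-- Multiplication by the variable `X a`. -/
noncomputable def Wx (K : Type*) [Field K] {E : Type*} (e : E) :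
    Module.End K (MvPolynomial E K) :=
  LinearMap.mulLeft K (X e)

/-- The partial derivative `∂_a`. -/
noncomputable def Wy (K : Type*) [Field K] {E : Type*} (e : E) :
    Module.End K (MvPolynomial E K) :=
  (pderiv e).toLinearMap

/-- The Weyl algebra `A_n(K)` in its standard representation: the subalgebra of
`End_K(K[x_0,…,x_{n-1}])` generated by the multiplication operators and the
partial derivatives. -/
noncomputable def WeylSubalgebra (K : Type*) [Field K] (E : Type*) :
    Subalgebra K (Module.End K (MvPolynomial E K)) :=
  Algebra.adjoin K ({g | ∃ e : E, g = Wx K e} ∪ {g | ∃ e : E, g = Wy K e})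

/-- The involution `τ` of `K[x_0,…,x_{n-1}]` determined by `τ(X_a) = −X_a`,
viewed as a `K`-linear endomorphism.  Conjugation by `τ` is the sign
automorphism `ε` of the Weyl algebra. -/
noncomputable def signInv (K : Type*) [Field K] (E : Type*) :
    Module.End K (MvPolynomial E K) :=
  (aeval (R := K) (fun e : E => -X e) : MvPolynomial E K →ₐ[K] MvPolynomial E K).toLinearMap


section Identities
variable {K : Type*} [Field K] {E : Type*}

lemma pderiv_pderiv_comm (i j : E) (p : MvPolynomial E K) :
    pderiv i (pderiv j p) = pderiv j (pderiv i p) := by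
  classical
  induction p using MvPolynomial.induction_on with
  | C a => simp [pderiv_C]
  | add p q hp hq => simp [hp, hq]
  | mul_X p k hp =>
      simp [pderiv_mul, pderiv_X, Pi.single_apply, apply_ite (pderiv i),
        apply_ite (pderiv j), pderiv_one, hp]
      ring

lemma wcomm_xx (a b : E) : Wx K a * Wx K b = Wx K b * Wx K a := by
  apply LinearMap.ext; intro p
  simp [Wx, Module.End.mul_apply]; ring

lemma wcomm_yy (a b : E) : Wy K a * Wy K b = Wy K b * Wy K a := by
  apply LinearMap.ext; intro p
  simp [Wy, Module.End.mul_apply, pderiv_pderiv_comm]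

lemma wcomm_yx (a b : E) (h : a ≠ b) : Wy K a * Wx K b = Wx K b * Wy K a := by
  apply LinearMap.ext; intro p
  simp [Wx, Wy, Module.End.mul_apply, pderiv_mul, pderiv_X_of_ne (Ne.symm h)]

lemma wyx_self (a : E) : Wy K a * Wx K a = Wx K a * Wy K a + 1 := by
  apply LinearMap.ext; intro p
  simp [Wx, Wy, Module.End.mul_apply, pderiv_mul]

lemma wq1 (a : E) : Wy K a * Wy K a * (Wx K a * Wx K a)
    = Wx K a * Wx K a * (Wy K a * Wy K a) + (4:K) • (Wx K a * Wy K a) + 2 := by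
  apply LinearMap.ext; intro p
  simp [Wx, Wy, Module.End.mul_apply, pderiv_mul, smul_eq_C_mul, map_ofNat]
  ring

lemma wq2 (i j : E) (h : i ≠ j) : (Wx K i * Wy K j) * (Wx K j * Wy K i)
    = (Wx K j * Wy K i) * (Wx K i * Wy K j) + Wx K i * Wy K i - Wx K j * Wy K j := by
  apply LinearMap.ext; intro p
  simp [Wx, Wy, Module.End.mul_apply, pderiv_mul, pderiv_X_of_ne h,
    pderiv_X_of_ne (Ne.symm h), pderiv_pderiv_comm i j]
  ring

lemma wq3 (i j k : E) (hij : i ≠ j) (hki : k ≠ i) (hkj : k ≠ j) :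
    (Wx K i * Wy K k) * (Wx K k * Wy K j)
    = (Wx K k * Wy K j) * (Wx K i * Wy K k) + Wx K i * Wy K j := by
  apply LinearMap.ext; intro p
  simp [Wx, Wy, Module.End.mul_apply, pderiv_mul, pderiv_X_of_ne hki,
    pderiv_X_of_ne hkj, pderiv_X_of_ne (Ne.symm hki), pderiv_X_of_ne (Ne.symm hkj),
    pderiv_X_of_ne hij, pderiv_X_of_ne (Ne.symm hij), pderiv_pderiv_comm k j]
  ring

lemma wq4 (i a : E) (h : i ≠ a) : (Wx K i * Wy K a) * (Wx K a * Wx K a)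
    = (Wx K a * Wx K a) * (Wx K i * Wy K a) + (2:K) • (Wx K i * Wx K a) := by
  apply LinearMap.ext; intro p
  simp [Wx, Wy, Module.End.mul_apply, pderiv_mul, smul_eq_C_mul, map_ofNat]
  ring

lemma wq5 (i j a : E) (hi : i ≠ a) (hj : j ≠ a) :
    (Wx K j * Wy K a) * (Wx K i * Wx K a)
    = (Wx K i * Wx K a) * (Wx K j * Wy K a) + Wx K i * Wx K j := by
  apply LinearMap.ext; intro p
  simp [Wx, Wy, Module.End.mul_apply, pderiv_mul, pderiv_X_of_ne hi, pderiv_X_of_ne hj]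
  ring

lemma wq6 (i a : E) (h : i ≠ a) : (Wy K a * Wy K a) * (Wx K a * Wy K i)
    = (Wx K a * Wy K i) * (Wy K a * Wy K a) + (2:K) • (Wy K i * Wy K a) := by
  apply LinearMap.ext; intro p
  simp [Wx, Wy, Module.End.mul_apply, pderiv_mul, smul_eq_C_mul, map_ofNat,
    pderiv_pderiv_comm a i]
  ring

lemma wq7 (i j a : E) (hi : i ≠ a) (hj : j ≠ a) :
    (Wy K i * Wy K a) * (Wx K a * Wy K j)
    = (Wx K a * Wy K j) * (Wy K i * Wy K a) + Wy K i * Wy K j := by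
  apply LinearMap.ext; intro p
  simp [Wx, Wy, Module.End.mul_apply, pderiv_mul, pderiv_X_of_ne hi, pderiv_X_of_ne hj,
    pderiv_X_of_ne (Ne.symm hi), pderiv_X_of_ne (Ne.symm hj),
    pderiv_pderiv_comm a j, pderiv_pderiv_comm a i, pderiv_pderiv_comm i j]
end Identities

section Tau
variable {K : Type*} [Field K] {E : Type*}

lemma tau_x (a : E) : signInv K E * Wx K a = -(Wx K a * signInv K E) := by
  apply LinearMap.ext; intro p
  simp [signInv, Wx, Module.End.mul_apply]

lemma aeval_neg_pderiv (a : E) (p : MvPolynomial E K) :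
    bind₁ (fun e : E => -X e : E → MvPolynomial E K) (pderiv a p)
      = -pderiv a (bind₁ (fun e : E => -X e : E → MvPolynomial E K) p) := by
  classical
  induction p using MvPolynomial.induction_on with
  | C c => simp [pderiv_C]
  | add p q hp hq => simp [hp, hq]; ring
  | mul_X p k hp =>
      simp [pderiv_mul, pderiv_X, Pi.single_apply, hp,
        apply_ite (bind₁ (fun e : E => -X e : E → MvPolynomial E K))]

lemma tau_y (a : E) : signInv K E * Wy K a = -(Wy K a * signInv K E) := by
  apply LinearMap.ext; intro p
  simp [signInv, Wy, Module.End.mul_apply, aeval_neg_pderiv]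

lemma tau_tau : signInv K E * signInv K E = 1 := by
  have h : (aeval (R := K) (fun e : E => -X e)).comp (aeval (R := K) (fun e : E => -X e))
      = AlgHom.id K (MvPolynomial E K) := by
    apply MvPolynomial.algHom_ext; intro e; simp
  apply LinearMap.ext; intro p
  have := congrArg (fun f => (f : MvPolynomial E K →ₐ[K] MvPolynomial E K) p) h
  simpa [signInv, Module.End.mul_apply] using this
end Tau

def spGens (K : Type*) [Field K] (n : ℕ) (hn : 1 ≤ n) :
    Set (Module.End K (MvPolynomial (Fin n) K)) :=
  {g : Module.End K (MvPolynomial (Fin n) K) |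
      ∃ i j : Fin n, ((i : ℕ) + 1 = (j : ℕ) ∨ (j : ℕ) + 1 = (i : ℕ)) ∧
        g = Wx K i * Wy K j} ∪
    {Wx K (⟨n - 1, (by omega : n - 1 < n + 0)⟩ : Fin n) * Wx K (⟨n - 1, (by omega : n - 1 < n + 0)⟩ : Fin n),
      Wy K (⟨n - 1, (by omega : n - 1 < n + 0)⟩ : Fin n) * Wy K (⟨n - 1, (by omega : n - 1 < n + 0)⟩ : Fin n)}

def Nv (n : ℕ) (hn : 1 ≤ n) : Fin n := ⟨n - 1, (by omega : n - 1 < n + 0)⟩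

section Mem
variable {K : Type*} [Field K] [CharZero K] {n : ℕ} (hn : 1 ≤ n)

lemma mem_base_xy {i j : Fin n} (h : (i : ℕ) + 1 = (j : ℕ) ∨ (j : ℕ) + 1 = (i : ℕ)) :
    Wx K i * Wy K j ∈ Algebra.adjoin K (spGens K n hn) :=
  Algebra.subset_adjoin (Or.inl ⟨i, j, h, rfl⟩)

lemma mem_base_xx : Wx K (Nv n hn) * Wx K (Nv n hn) ∈ Algebra.adjoin K (spGens K n hn) :=
  Algebra.subset_adjoin (Or.inr (by left; rfl))

lemma mem_base_yy : Wy K (Nv n hn) * Wy K (Nv n hn) ∈ Algebra.adjoin K (spGens K n hn) :=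
  Algebra.subset_adjoin (Or.inr (by right; rfl))

lemma mem_two : (2 : Module.End K (MvPolynomial (Fin n) K)) ∈ Algebra.adjoin K (spGens K n hn) := by
  have := Subalgebra.natCast_mem (Algebra.adjoin K (spGens K n hn)) 2
  simpa using this

lemma mem_diag_last : Wx K (Nv n hn) * Wy K (Nv n hn) ∈ Algebra.adjoin K (spGens K n hn) := by
  set N := Nv n hn
  have h := wq1 (K := K) N
  have h2 : (4:K) • (Wx K N * Wy K N)
      = Wy K N * Wy K N * (Wx K N * Wx K N) - Wx K N * Wx K N * (Wy K N * Wy K N) - 2 := by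
    rw [h]; abel
  have h3 : Wx K N * Wy K N = (4:K)⁻¹ • (Wy K N * Wy K N * (Wx K N * Wx K N)
      - Wx K N * Wx K N * (Wy K N * Wy K N) - 2) := by
    rw [← h2, smul_smul, inv_mul_cancel₀ (by norm_num : (4:K) ≠ 0), one_smul]
  rw [h3]
  exact Subalgebra.smul_mem _ (sub_mem (sub_mem (mul_mem (mem_base_yy (K := K) hn) (mem_base_xx (K := K) hn))
    (mul_mem (mem_base_xx (K := K) hn) (mem_base_yy (K := K) hn))) (mem_two (K := K) hn)) _

lemma mem_diag (i : Fin n) : Wx K i * Wy K i ∈ Algebra.adjoin K (spGens K n hn) := by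
  suffices H : ∀ k : ℕ, ∀ i : Fin n, n - 1 - (i : ℕ) = k →
      Wx K i * Wy K i ∈ Algebra.adjoin K (spGens K n hn) from H _ i rfl
  intro k
  induction k with
  | zero =>
      intro i h
      have hi : (i : ℕ) = n - 1 := by have := i.isLt; omega
      have hiN : i = Nv n hn := by apply Fin.ext; exact hi
      rw [hiN]; exact mem_diag_last hn
  | succ k ih =>
      intro i h
      have hilt : (i : ℕ) + 1 < n := by have := i.isLt; omega
      set j : Fin n := ⟨(i : ℕ) + 1, hilt⟩ with hj
      have hjv : (j : ℕ) = (i : ℕ) + 1 := rfl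
      have hij : i ≠ j := fun e => by rw [e, hjv] at hjv; omega
      have h2 := wq2 (K := K) i j hij
      have h3 : Wx K i * Wy K i = ((Wx K i * Wy K j) * (Wx K j * Wy K i)
          - (Wx K j * Wy K i) * (Wx K i * Wy K j)) + Wx K j * Wy K j := by
        rw [h2]; abel
      rw [h3]
      have b1 : Wx K i * Wy K j ∈ Algebra.adjoin K (spGens K n hn) :=
        mem_base_xy hn (Or.inl hjv.symm)
      have b2 : Wx K j * Wy K i ∈ Algebra.adjoin K (spGens K n hn) :=
        mem_base_xy hn (Or.inr hjv.symm)
      exact add_mem (sub_mem (mul_mem b1 b2) (mul_mem b2 b1)) (ih j (by rw [hjv]; omega))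

lemma mem_exy (i j : Fin n) : Wx K i * Wy K j ∈ Algebra.adjoin K (spGens K n hn) := by
  suffices H : ∀ d : ℕ, ∀ i j : Fin n,
      ((i : ℕ) + d + 1 = (j : ℕ) ∨ (j : ℕ) + d + 1 = (i : ℕ)) →
      Wx K i * Wy K j ∈ Algebra.adjoin K (spGens K n hn) by
    rcases eq_or_ne i j with rfl | hij
    · exact mem_diag hn i
    · have hv : (i : ℕ) ≠ (j : ℕ) := fun e => hij (Fin.ext e)
      rcases Nat.lt_or_ge (i : ℕ) (j : ℕ) with hlt | hge
      · exact H ((j : ℕ) - (i : ℕ) - 1) i j (Or.inl (by omega))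
      · exact H ((i : ℕ) - (j : ℕ) - 1) i j (Or.inr (by omega))
  intro d
  induction d with
  | zero => intro i j h; exact mem_base_xy hn (by omega)
  | succ d ih =>
      intro i j h
      have hij : i ≠ j := fun e => by rw [e] at h; omega
      rcases h with h | h
      · set k : Fin n := ⟨(i : ℕ) + d + 1, by have := j.isLt; omega⟩ with hk
        have hkv : (k : ℕ) = (i : ℕ) + d + 1 := rfl
        have hki : k ≠ i := fun e => by rw [← e, hkv] at hkv; omega
        have hkj : k ≠ j := fun e => by have : (k:ℕ) = (j:ℕ) := congrArg Fin.val e; omega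
        have h3 := wq3 (K := K) i j k hij hki hkj
        have h4 : Wx K i * Wy K j = (Wx K i * Wy K k) * (Wx K k * Wy K j)
            - (Wx K k * Wy K j) * (Wx K i * Wy K k) := by rw [h3]; abel
        rw [h4]
        have b1 : Wx K i * Wy K k ∈ Algebra.adjoin K (spGens K n hn) :=
          ih i k (Or.inl (by omega))
        have b2 : Wx K k * Wy K j ∈ Algebra.adjoin K (spGens K n hn) :=
          mem_base_xy hn (Or.inl (by omega))
        exact sub_mem (mul_mem b1 b2) (mul_mem b2 b1)
      · set k : Fin n := ⟨(j : ℕ) + d + 1, by have := i.isLt; omega⟩ with hk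
        have hkv : (k : ℕ) = (j : ℕ) + d + 1 := rfl
        have hki : k ≠ i := fun e => by have : (k:ℕ) = (i:ℕ) := congrArg Fin.val e; omega
        have hkj : k ≠ j := fun e => by have : (k:ℕ) = (j:ℕ) := congrArg Fin.val e; omega
        have h3 := wq3 (K := K) i j k hij hki hkj
        have h4 : Wx K i * Wy K j = (Wx K i * Wy K k) * (Wx K k * Wy K j)
            - (Wx K k * Wy K j) * (Wx K i * Wy K k) := by rw [h3]; abel
        rw [h4]
        have b1 : Wx K i * Wy K k ∈ Algebra.adjoin K (spGens K n hn) :=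
          mem_base_xy hn (Or.inr (by omega))
        have b2 : Wx K k * Wy K j ∈ Algebra.adjoin K (spGens K n hn) :=
          ih k j (Or.inr (by omega))
        exact sub_mem (mul_mem b1 b2) (mul_mem b2 b1)
end Mem

section Mem2
variable {K : Type*} [Field K] [CharZero K] {n : ℕ} (hn : 1 ≤ n)

lemma mem_xxN {i : Fin n} (h : i ≠ Nv n hn) :
    Wx K i * Wx K (Nv n hn) ∈ Algebra.adjoin K (spGens K n hn) := by
  set N := Nv n hn
  have h4 := wq4 (K := K) i N h
  have h2 : (2:K) • (Wx K i * Wx K N)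
      = (Wx K i * Wy K N) * (Wx K N * Wx K N) - (Wx K N * Wx K N) * (Wx K i * Wy K N) := by
    rw [h4]; abel
  have h3 : Wx K i * Wx K N = (2:K)⁻¹ • ((Wx K i * Wy K N) * (Wx K N * Wx K N)
      - (Wx K N * Wx K N) * (Wx K i * Wy K N)) := by
    rw [← h2, smul_smul, inv_mul_cancel₀ (by norm_num : (2:K) ≠ 0), one_smul]
  rw [h3]
  exact Subalgebra.smul_mem _ (sub_mem (mul_mem (mem_exy hn i N) (mem_base_xx (K := K) hn))
    (mul_mem (mem_base_xx (K := K) hn) (mem_exy hn i N))) _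

lemma mem_xx (i j : Fin n) : Wx K i * Wx K j ∈ Algebra.adjoin K (spGens K n hn) := by
  set N := Nv n hn with hN
  rcases eq_or_ne i N with rfl | hi
  · rcases eq_or_ne j N with rfl | hj
    · exact mem_base_xx (K := K) hn
    · rw [wcomm_xx]; exact mem_xxN hn hj
  · rcases eq_or_ne j N with rfl | hj
    · exact mem_xxN hn hi
    · have h5 := wq5 (K := K) i j N hi hj
      have h6 : Wx K i * Wx K j = (Wx K j * Wy K N) * (Wx K i * Wx K N)
          - (Wx K i * Wx K N) * (Wx K j * Wy K N) := by rw [h5]; abel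
      rw [h6]
      exact sub_mem (mul_mem (mem_exy hn j N) (mem_xxN hn hi))
        (mul_mem (mem_xxN hn hi) (mem_exy hn j N))

lemma mem_yyN {i : Fin n} (h : i ≠ Nv n hn) :
    Wy K i * Wy K (Nv n hn) ∈ Algebra.adjoin K (spGens K n hn) := by
  set N := Nv n hn
  have h4 := wq6 (K := K) i N h
  have h2 : (2:K) • (Wy K i * Wy K N)
      = (Wy K N * Wy K N) * (Wx K N * Wy K i) - (Wx K N * Wy K i) * (Wy K N * Wy K N) := by
    rw [h4]; abel
  have h3 : Wy K i * Wy K N = (2:K)⁻¹ • ((Wy K N * Wy K N) * (Wx K N * Wy K i)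
      - (Wx K N * Wy K i) * (Wy K N * Wy K N)) := by
    rw [← h2, smul_smul, inv_mul_cancel₀ (by norm_num : (2:K) ≠ 0), one_smul]
  rw [h3]
  exact Subalgebra.smul_mem _ (sub_mem (mul_mem (mem_base_yy (K := K) hn) (mem_exy hn N i))
    (mul_mem (mem_exy hn N i) (mem_base_yy (K := K) hn))) _

lemma mem_yy (i j : Fin n) : Wy K i * Wy K j ∈ Algebra.adjoin K (spGens K n hn) := by
  set N := Nv n hn with hN
  rcases eq_or_ne i N with rfl | hi
  · rcases eq_or_ne j N with rfl | hj
    · exact mem_base_yy (K := K) hn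
    · rw [wcomm_yy]; exact mem_yyN hn hj
  · rcases eq_or_ne j N with rfl | hj
    · exact mem_yyN hn hi
    · have h5 := wq7 (K := K) i j N hi hj
      have h6 : Wy K i * Wy K j = (Wy K i * Wy K N) * (Wx K N * Wy K j)
          - (Wx K N * Wy K j) * (Wy K i * Wy K N) := by rw [h5]; abel
      rw [h6]
      exact sub_mem (mul_mem (mem_yyN hn hi) (mem_exy hn N j))
        (mul_mem (mem_exy hn N j) (mem_yyN hn hi))

lemma mem_pair {g h : Module.End K (MvPolynomial (Fin n) K)}
    (hg : g ∈ ({g | ∃ e : Fin n, g = Wx K e} ∪ {g | ∃ e : Fin n, g = Wy K e} :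
      Set (Module.End K (MvPolynomial (Fin n) K))))
    (hh : h ∈ ({g | ∃ e : Fin n, g = Wx K e} ∪ {g | ∃ e : Fin n, g = Wy K e} :
      Set (Module.End K (MvPolynomial (Fin n) K)))) :
    g * h ∈ Algebra.adjoin K (spGens K n hn) := by
  rcases hg with ⟨i, rfl⟩ | ⟨i, rfl⟩ <;> rcases hh with ⟨j, rfl⟩ | ⟨j, rfl⟩
  · exact mem_xx hn i j
  · exact mem_exy hn i j
  · rcases eq_or_ne i j with rfl | hij
    · rw [wyx_self]; exact add_mem (mem_exy hn i i) (one_mem _)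
    · rw [wcomm_yx _ _ hij]; exact mem_exy hn j i
  · exact mem_yy hn i j

lemma mem_even_prod : ∀ k : ℕ, ∀ l : List (Module.End K (MvPolynomial (Fin n) K)),
    l.length = 2 * k →
    (∀ x ∈ l, x ∈ ({g | ∃ e : Fin n, g = Wx K e} ∪ {g | ∃ e : Fin n, g = Wy K e} :
      Set (Module.End K (MvPolynomial (Fin n) K)))) →
    l.prod ∈ Algebra.adjoin K (spGens K n hn) := by
  intro k
  induction k with
  | zero =>
      intro l hl _
      have : l = [] := List.eq_nil_of_length_eq_zero (by omega)
      rw [this, List.prod_nil]; exact one_mem _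
  | succ k ih =>
      intro l hl hmem
      match l with
      | a :: b :: t =>
          have ht : t.length = 2 * k := by
            have := hl; simp only [List.length_cons] at this; omega
          have : (a :: b :: t).prod = (a * b) * t.prod := by simp [mul_assoc]
          rw [this]
          exact mul_mem (mem_pair hn (hmem a (by simp)) (hmem b (by simp)))
            (ih t ht fun x hx => hmem x (by simp [hx]))
end Mem2

section Final
variable {K : Type*} [Field K] [CharZero K] {n : ℕ}

lemma tau_conj {A : Type*} [Ring A] {τ a b : A}
    (ha : τ * a = -(a * τ)) (hb : τ * b = -(b * τ)) : τ * (a * b) = (a * b) * τ := by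
  rw [← mul_assoc, ha, neg_mul, mul_assoc, hb, mul_neg, neg_neg, mul_assoc]

lemma tau_gen {g : Module.End K (MvPolynomial (Fin n) K)}
    (hg : g ∈ ({g | ∃ e : Fin n, g = Wx K e} ∪ {g | ∃ e : Fin n, g = Wy K e} :
      Set (Module.End K (MvPolynomial (Fin n) K)))) :
    signInv K (Fin n) * g = -(g * signInv K (Fin n)) := by
  rcases hg with ⟨e, rfl⟩ | ⟨e, rfl⟩
  · exact tau_x e
  · exact tau_y e

lemma tau_word_ring {R : Type*} [Ring R] {s : Set R} {τ : R}
    (hs : ∀ g ∈ s, τ * g = -(g * τ)) :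
    ∀ l : List R, (∀ x ∈ l, x ∈ s) →
      τ * l.prod = (if Even l.length then l.prod * τ else -(l.prod * τ)) := by
  intro l
  induction l with
  | nil => simp
  | cons a t ih =>
      intro h
      have ha := hs a (h a (by simp))
      have ht := ih (fun x hx => h x (by simp [hx]))
      rw [List.prod_cons, ← mul_assoc, ha, neg_mul, mul_assoc, ht]
      by_cases hev : Even t.length
      · simp only [hev, if_true, List.length_cons, Nat.even_add_one, not_true,
          if_false, List.prod_cons]
        simp [hev]
        noncomm_ring
      · simp only [hev, if_false, List.length_cons, Nat.even_add_one, not_false_iff,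
          if_true, List.prod_cons]
        simp [hev]
        noncomm_ring

lemma ring_aux1 {R : Type*} [Ring R] (p τ : R) (h : τ * τ = 1) :
    p + -(p * τ) * τ = 0 := by
  rw [neg_mul, mul_assoc, h, mul_one, add_neg_cancel]

theorem adjoin_sp_eq_sign_fixed' (K : Type*) [Field K] [CharZero K] (n : ℕ) (hn : 1 ≤ n) :
    (↑(Algebra.adjoin K (spGens K n hn)) : Set (Module.End K (MvPolynomial (Fin n) K))) =
      {w : Module.End K (MvPolynomial (Fin n) K) |
        w ∈ WeylSubalgebra K (Fin n) ∧ w * signInv K (Fin n) = signInv K (Fin n) * w} := by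
  classical
  set τ := signInv K (Fin n) with hτ
  set Gens : Set (Module.End K (MvPolynomial (Fin n) K)) :=
    {g | ∃ e : Fin n, g = Wx K e} ∪ {g | ∃ e : Fin n, g = Wy K e} with hGens
  have hWeyl : WeylSubalgebra K (Fin n) = Algebra.adjoin K Gens := rfl
  have hττ : τ * τ = 1 := tau_tau
  apply Set.eq_of_subset_of_subset
  · -- adjoin ⊆ fixed
    have hpair : ∀ g ∈ spGens K n hn, ∃ a b : Module.End K (MvPolynomial (Fin n) K),
        a ∈ Gens ∧ b ∈ Gens ∧ g = a * b := by
      intro g hg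
      rcases hg with ⟨i, j, _, rfl⟩ | hg
      · exact ⟨_, _, Or.inl ⟨i, rfl⟩, Or.inr ⟨j, rfl⟩, rfl⟩
      · rcases hg with rfl | rfl
        · exact ⟨_, _, Or.inl ⟨_, rfl⟩, Or.inl ⟨_, rfl⟩, rfl⟩
        · exact ⟨_, _, Or.inr ⟨_, rfl⟩, Or.inr ⟨_, rfl⟩, rfl⟩
    have hsub1 : Algebra.adjoin K (spGens K n hn) ≤ WeylSubalgebra K (Fin n) := by
      apply Algebra.adjoin_le
      intro g hg
      obtain ⟨a, b, ha, hb, rfl⟩ := hpair g hg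
      rw [hWeyl]
      exact mul_mem (Algebra.subset_adjoin ha) (Algebra.subset_adjoin hb)
    have hsub2 : Algebra.adjoin K (spGens K n hn) ≤ Subalgebra.centralizer K {τ} := by
      apply Algebra.adjoin_le
      intro g hg
      obtain ⟨a, b, ha, hb, rfl⟩ := hpair g hg
      rw [SetLike.mem_coe, Subalgebra.mem_centralizer_iff]
      rintro y (rfl : y = τ)
      exact tau_conj (tau_gen ha) (tau_gen hb)
    intro w hw
    refine ⟨hsub1 hw, ?_⟩
    have := (Subalgebra.mem_centralizer_iff K).mp (hsub2 hw) τ rfl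
    exact this.symm
  · -- fixed ⊆ adjoin
    rintro w ⟨hW, hcomm⟩
    set Pl : Module.End K (MvPolynomial (Fin n) K) →ₗ[K] Module.End K (MvPolynomial (Fin n) K) :=
      (2:K)⁻¹ • (LinearMap.id + (LinearMap.mulRight K τ).comp (LinearMap.mulLeft K τ)) with hPl
    have hPl_apply : ∀ f : Module.End K (MvPolynomial (Fin n) K),
        Pl f = (2:K)⁻¹ • (f + τ * f * τ) := by
      intro f; simp [hPl]
    have hP : ∀ m ∈ Submonoid.closure Gens,
        Pl m ∈ Subalgebra.toSubmodule (Algebra.adjoin K (spGens K n hn)) := by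
      intro m hm
      obtain ⟨l, hl, rfl⟩ := Submonoid.exists_list_of_mem_closure hm
      have hword := tau_word_ring (fun g hg => tau_gen hg) l hl
      rcases Nat.even_or_odd l.length with he | ho
      · have hconj : τ * l.prod * τ = l.prod := by
          rw [hword, if_pos he, mul_assoc, hττ, mul_one]
        have hpl : Pl l.prod = l.prod := by
          rw [hPl_apply, hconj, ← two_smul K, smul_smul,
            inv_mul_cancel₀ (by norm_num : (2:K) ≠ 0), one_smul]
        rw [hpl]
        obtain ⟨k, hk⟩ := he
        exact mem_even_prod hn k l (by omega) hl
      · have hzero : l.prod + τ * l.prod * τ = 0 := by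
          rw [hword, if_neg (by simp only [Nat.not_even_iff_odd]; exact ho)]
          exact ring_aux1 l.prod τ hττ
        have hpl : Pl l.prod = 0 := by
          rw [hPl_apply, hzero, smul_zero]
        rw [hpl]
        exact zero_mem _
    have hw_span : w ∈ Submodule.span K
        ((Submonoid.closure Gens : Submonoid (Module.End K (MvPolynomial (Fin n) K))) :
          Set (Module.End K (MvPolynomial (Fin n) K))) := by
      have hsp := Algebra.adjoin_eq_span (R := K) (s := Gens)
      rw [hWeyl] at hW
      rw [← hsp]
      exact hW
    have hmem : Pl w ∈ Subalgebra.toSubmodule (Algebra.adjoin K (spGens K n hn)) := by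
      have hle : Submodule.span K
          ((Submonoid.closure Gens : Submonoid (Module.End K (MvPolynomial (Fin n) K))) :
            Set (Module.End K (MvPolynomial (Fin n) K))) ≤
          Submodule.comap Pl (Subalgebra.toSubmodule (Algebra.adjoin K (spGens K n hn))) :=
        Submodule.span_le.mpr (fun m hm => hP m hm)
      exact hle hw_span
    have hPw : Pl w = w := by
      rw [hPl_apply, ← hcomm, mul_assoc, hττ, mul_one, ← two_smul K, smul_smul,
        inv_mul_cancel₀ (by norm_num : (2:K) ≠ 0), one_smul]
    rw [← hPw]
    exact hmem
end Final


/-- The subalgebra of the Weyl algebra generated by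
`{x_i ∂_j : |i − j| = 1} ∪ {x_{n-1}², ∂_{n-1}²}` equals the fixed-point
subalgebra `A_n(K)^ε`, i.e. the set of Weyl-algebra elements commuting with `τ`:
the image of `π : U(sp_{2n}) → A_n(K)` is `A_n(K)^ε`. -/
theorem adjoin_sp_eq_sign_fixed (K : Type*) [Field K] [CharZero K] (n : ℕ) (hn : 1 ≤ n) :
    (Algebra.adjoin K
        ({g : Module.End K (MvPolynomial (Fin n) K) |
            ∃ i j : Fin n, ((i : ℕ) + 1 = (j : ℕ) ∨ (j : ℕ) + 1 = (i : ℕ)) ∧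
              g = Wx K i * Wy K j} ∪
          {Wx K (⟨n - 1, by omega⟩ : Fin n) * Wx K (⟨n - 1, by omega⟩ : Fin n),
            Wy K (⟨n - 1, by omega⟩ : Fin n) * Wy K (⟨n - 1, by omega⟩ : Fin n)}) :
        Set (Module.End K (MvPolynomial (Fin n) K))) =
      {w : Module.End K (MvPolynomial (Fin n) K) |
        w ∈ WeylSubalgebra K (Fin n) ∧ w * signInv K (Fin n) = signInv K (Fin n) * w} :=
  adjoin_sp_eq_sign_fixed' K n hn
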